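/- For every R > 0 there exists Δ > 0 such that for all λ > 1, the Julia set of f_λ(z) = λ(e^z − 1), with the union of balls B(2πni, R) over all integers n removed, is contained in the half-plane {z ∈ ℂ : Re z ≥ Δ}. -/

import Mathlib

open Complex Metric

/-- The Fatou set of an entire map: points having a neighborhood on which the family of
iterates is equicontinuous. -/
def fatouSet (f : ℂ → ℂ) : Set ℂ :=
  {z | ∃ U ∈ nhds z, EquicontinuousOn (fun n : ℕ => f^[n]) U}

/-- The Julia set: complement of the Fatou set. -/
def juliaSet (f : ℂ → ℂ) : Set ℂ := (fatouSet f)ᶜ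

-- step bound lemma: geometry of the strip minus balls
lemma cos_bound {d : ℝ} (hd0 : 0 < d) (_hdpi : d ≤ Real.pi / 2) {y : ℝ}
    (hy : ∀ n : ℤ, d ≤ |y - 2 * Real.pi * n|) : Real.cos y ≤ Real.cos d := by
  have hpi := Real.pi_pos
  set n : ℤ := round (y / (2 * Real.pi)) with hn
  have habs : |y - 2 * Real.pi * n| ≤ Real.pi := by
    have h1 : |y / (2 * Real.pi) - n| ≤ 1 / 2 := abs_sub_round _
    have h2 : y - 2 * Real.pi * n = (2 * Real.pi) * (y / (2 * Real.pi) - n) := by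
      field_simp
    rw [h2, abs_mul, abs_of_pos (by positivity : (0:ℝ) < 2 * Real.pi)]
    calc 2 * Real.pi * |y / (2 * Real.pi) - ↑n| ≤ 2 * Real.pi * (1 / 2) :=
          mul_le_mul_of_nonneg_left h1 (by positivity)
      _ = Real.pi := by ring
  have hcy : Real.cos y = Real.cos (y - 2 * Real.pi * n) := by
    have := Real.cos_add_int_mul_two_pi (y - 2 * Real.pi * n) n
    rw [← this]
    ring_nf
  rw [hcy, ← Real.cos_abs (y - 2 * Real.pi * n)]
  exact Real.cos_le_cos_of_nonneg_of_le_pi hd0.le habs (hy n)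

lemma re_f (lam : ℝ) (w : ℂ) :
    ((lam : ℂ) * (Complex.exp w - 1)).re = lam * (Real.exp w.re * Real.cos w.im - 1) := by
  rw [Complex.re_ofReal_mul, Complex.sub_re, Complex.exp_re, Complex.one_re]

lemma half_step {lam : ℝ} (hlam : 0 ≤ lam) {t : ℝ} {w : ℂ} (hw : w.re ≤ -t) :
    ((lam : ℂ) * (Complex.exp w - 1)).re ≤ lam * (Real.exp (-t) - 1) := by
  rw [re_f]
  have h2 : (0:ℝ) < Real.exp w.re := Real.exp_pos _
  have h1 : Real.exp w.re * Real.cos w.im ≤ Real.exp w.re :=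
    mul_le_of_le_one_right h2.le (Real.cos_le_one w.im)
  have h3 : Real.exp w.re ≤ Real.exp (-t) := Real.exp_le_exp.2 hw
  have := h1.trans h3
  exact mul_le_mul_of_nonneg_left (by linarith) hlam

lemma exp_neg_le_affine {t c : ℝ} (ht : 0 ≤ t) (htc : t ≤ c) (hc : 0 < c) :
    Real.exp (-t) ≤ 1 - t / c * (1 - Real.exp (-c)) := by
  have hs0 : 0 ≤ t / c := div_nonneg ht hc.le
  have hs1 : t / c ≤ 1 := div_le_one_of_le₀ htc hc.le
  have key := convexOn_exp.2 (Set.mem_univ (0:ℝ)) (Set.mem_univ (-c))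
    (show (0:ℝ) ≤ 1 - t/c by linarith) hs0 (by ring)
  have he : (1 - t/c) • (0:ℝ) + (t/c) • (-c) = -t := by
    simp only [smul_eq_mul]; field_simp; ring
  rw [he] at key
  simp only [smul_eq_mul, Real.exp_zero, mul_one] at key
  linarith

lemma lip_exp {lam c : ℝ} (hq : lam * Real.exp (-c) ≤ 1) (hlam : 0 ≤ lam) :
    LipschitzOnWith 1 (fun z : ℂ => (lam : ℂ) * (Complex.exp z - 1)) {z : ℂ | z.re ≤ -c} := by
  have hconv : Convex ℝ {z : ℂ | z.re ≤ -c} := convex_halfSpace_re_le (-c)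
  apply hconv.lipschitzOnWith_of_nnnorm_hasFDerivWithin_le
    (f' := fun w => ((ContinuousLinearMap.smulRight (1 : ℂ →L[ℂ] ℂ)
      ((lam : ℂ) * Complex.exp w)).restrictScalars ℝ))
  · intro x hx
    have h1 : HasDerivAt (fun z : ℂ => (lam : ℂ) * (Complex.exp z - 1))
        ((lam : ℂ) * Complex.exp x) x := by
      simpa using (((Complex.hasDerivAt_exp x).sub_const 1).const_mul (lam : ℂ))
    exact (h1.hasFDerivAt.restrictScalars ℝ).hasFDerivWithinAt
  · intro x hx
    rw [← NNReal.coe_le_coe]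
    push_cast
    rw [ContinuousLinearMap.norm_restrictScalars, ContinuousLinearMap.norm_smulRight_apply]
    simp only [ContinuousLinearMap.norm_id, one_mul, norm_mul, Complex.norm_real,
      Real.norm_eq_abs, Complex.norm_exp, norm_one]
    rw [_root_.abs_of_nonneg hlam]
    calc lam * Real.exp x.re ≤ lam * Real.exp (-c) :=
          mul_le_mul_of_nonneg_left (Real.exp_le_exp.2 hx) hlam
      _ ≤ 1 := hq
  
/-- Dynamics: if a whole open neighborhood U maps (in one step) into {Re ≤ -ε₀},
then every point of U is a point of equicontinuity of the iterates. -/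
lemma fatou_of_step {lam : ℝ} (hlam : 1 < lam) {U : Set ℂ} (hUo : IsOpen U) {ε₀ : ℝ}
    (hε₀ : 0 < ε₀)
    (hstep1 : ∀ w ∈ U, ((lam : ℂ) * (Complex.exp w - 1)).re ≤ -ε₀) :
    EquicontinuousOn (fun n : ℕ => (fun z : ℂ => (lam : ℂ) * (Complex.exp z - 1))^[n]) U := by
  set f : ℂ → ℂ := fun z : ℂ => (lam : ℂ) * (Complex.exp z - 1) with hf
  have hlam0 : (0:ℝ) ≤ lam := by linarith
  set L : ℝ := Real.log lam with hLdef
  have hL0 : 0 ≤ L := Real.log_nonneg hlam.le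
  have hexpL : Real.exp (-L) = 1 / lam := by
    rw [Real.exp_neg, Real.exp_log (by linarith), one_div]
  set hL : ℝ := lam - 1 - L with hhL
  have hhL0 : 0 < hL := by
    have := Real.log_lt_sub_one_of_pos (show (0:ℝ) < lam by linarith) (by linarith)
    simp only [hhL]; linarith
  set c : ℝ := L + hL / 2 with hcdef
  have hc0 : 0 < c := by positivity
  set ε₁ : ℝ := min ε₀ c with hε₁def
  have hε₁0 : 0 < ε₁ := lt_min hε₀ hc0
  set m : ℝ := ε₁ / c * (hL / 2) with hmdef
  have hm0 : 0 < m := by positivity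
  -- h function facts
  have hhc : hL / 2 ≤ lam * (1 - Real.exp (-c)) - c := by
    have h1 : Real.exp (-c) ≤ Real.exp (-L) := Real.exp_le_exp.2 (by simp only [hcdef]; linarith)
    rw [hexpL] at h1
    have : lam * Real.exp (-c) ≤ lam * (1/lam) := mul_le_mul_of_nonneg_left h1 hlam0
    rw [mul_one_div, div_self (by linarith : lam ≠ 0)] at this
    simp only [hcdef, hhL]
    nlinarith
  have hhc0 : 0 ≤ lam * (1 - Real.exp (-c)) - c := le_trans (by positivity) hhc
  have hht : ∀ t : ℝ, ε₁ ≤ t → t ≤ c → m ≤ lam * (1 - Real.exp (-t)) - t := by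
    intro t ht1 htc
    have ht0 : 0 ≤ t := le_trans hε₁0.le ht1
    have haff := exp_neg_le_affine ht0 htc hc0
    have key : t / c * (lam * (1 - Real.exp (-c)) - c) ≤ lam * (1 - Real.exp (-t)) - t := by
      have h2 : lam * (t / c * (1 - Real.exp (-c))) ≤ lam * (1 - Real.exp (-t)) := by
        apply mul_le_mul_of_nonneg_left _ hlam0
        linarith
      have h3 : t / c * c = t := div_mul_cancel₀ t hc0.ne'
      nlinarith
    calc m ≤ t / c * (lam * (1 - Real.exp (-c)) - c) :=
          mul_le_mul (by gcongr) hhc (by positivity) (by positivity)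
      _ ≤ _ := key
  -- invariant contraction region
  set S : Set ℂ := {z : ℂ | z.re ≤ -c} with hSdef
  have hinv : ∀ w : ℂ, w.re ≤ -c → (f w).re ≤ -c := by
    intro w hw
    have h5 := half_step hlam0 hw (lam := lam)
    have h6 : lam * (Real.exp (-c) - 1) ≤ -c := by nlinarith [hhc0]
    exact le_trans h5 h6
  have hq : lam * Real.exp (-c) ≤ 1 := by
    have h1 : Real.exp (-c) ≤ Real.exp (-L) := Real.exp_le_exp.2 (by simp only [hcdef]; linarith)
    rw [hexpL] at h1
    calc lam * Real.exp (-c) ≤ lam * (1 / lam) := mul_le_mul_of_nonneg_left h1 hlam0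
      _ = 1 := by field_simp
  have hlip : LipschitzOnWith 1 f S := lip_exp hq hlam0
  have hmaps : Set.MapsTo f S S := fun w hw => hinv w hw
  have hiter : ∀ k : ℕ, Set.MapsTo f^[k] S S ∧ LipschitzOnWith 1 f^[k] S := by
    intro k
    induction k with
    | zero => exact ⟨Set.mapsTo_id S, by simpa using (LipschitzWith.id).lipschitzOnWith (s := S)⟩
    | succ n ih =>
      rw [Function.iterate_succ']
      exact ⟨hmaps.comp ih.1, by simpa using hlip.comp ih.2 ih.1⟩
  -- the orbit of U sinks at definite speed
  have horbit : ∀ k : ℕ, ∀ w ∈ U, (f^[k + 1] w).re ≤ -(min (ε₁ + k * m) c) := by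
    intro k
    induction k with
    | zero =>
      intro w hw
      push_cast
      have h6 := hstep1 w hw
      have h7 : min (ε₁ + 0 * m) c ≤ ε₀ := by
        simp only [Nat.cast_zero, zero_mul, add_zero]
        exact le_trans (min_le_left _ _) (min_le_left _ _)
      calc (f^[1] w).re = (f w).re := by rw [Function.iterate_one]
        _ ≤ -ε₀ := h6
        _ ≤ -(min (ε₁ + 0 * m) c) := by linarith
    | succ n ih =>
      intro w hw
      have hs := ih w hw
      set s : ℝ := min (ε₁ + n * m) c with hsd
      have hs_le_c : s ≤ c := min_le_right _ _
      have h7 : (f^[n + 1 + 1] w).re ≤ lam * (Real.exp (-s) - 1) := by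
        rw [Function.iterate_succ_apply']
        exact half_step hlam0 hs
      have h8 : min (ε₁ + (n + 1 : ℕ) * m) c ≤ lam * (1 - Real.exp (-s)) := by
        rcases le_total (ε₁ + n * m) c with hcase | hcase
        · have hseq : s = ε₁ + n * m := min_eq_left hcase
          have hsl : ε₁ ≤ s := by
            rw [hseq]
            nlinarith [hm0, Nat.cast_nonneg (α := ℝ) n]
          have h9 := hht s hsl hs_le_c
          have h10 : min (ε₁ + (n + 1 : ℕ) * m) c ≤ ε₁ + (n + 1 : ℕ) * m := min_le_left _ _
          push_cast at h10 ⊢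
          linarith [h9, hseq]
        · have hseq : s = c := min_eq_right hcase
          have h10 : min (ε₁ + (n + 1 : ℕ) * m) c ≤ c := min_le_right _ _
          rw [hseq]
          linarith [hhc0]
      calc (f^[n + 1 + 1] w).re ≤ lam * (Real.exp (-s) - 1) := h7
        _ ≤ -(min (ε₁ + (n + 1 : ℕ) * m) c) := by linarith
  -- after N+1 steps we are in S
  set N : ℕ := ⌈c / m⌉₊ with hNd
  have hNm : c ≤ ε₁ + N * m := by
    have h1 : c / m ≤ (N : ℝ) := Nat.le_ceil _
    have h2 : c ≤ N * m := by
      rw [div_le_iff₀ hm0] at h1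
      linarith
    linarith
  have hkey : ∀ w ∈ U, f^[N + 1] w ∈ S := by
    intro w hw
    have h1 := horbit N w hw
    rw [min_eq_right hNm] at h1
    exact h1
  -- equicontinuity
  intro x hx V hV
  obtain ⟨ε, hε, hV'⟩ := Metric.mem_uniformity_dist.1 hV
  have hcf : Continuous f := by
    have : Continuous Complex.exp := Complex.continuous_exp
    fun_prop
  have hcont : ∀ k : ℕ, Continuous f^[k] := fun k => hcf.iterate k
  have hev1 : ∀ᶠ y in nhds x, ∀ k ∈ Finset.range (N + 2),
      dist (f^[k] y) (f^[k] x) < ε := by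
    rw [Filter.eventually_all_finset]
    intro k _
    exact Metric.tendsto_nhds.mp (hcont k).continuousAt ε hε
  have hevU : ∀ᶠ y in nhds x, y ∈ U := hUo.mem_nhds hx
  have hfin : ∀ᶠ y in nhdsWithin x U,
      (∀ k ∈ Finset.range (N + 2), dist (f^[k] y) (f^[k] x) < ε) ∧ y ∈ U :=
    (hev1.and hevU).filter_mono nhdsWithin_le_nhds
  filter_upwards [hfin] with y hy
  obtain ⟨h1, hyU⟩ := hy
  intro n
  rcases le_or_gt n (N + 1) with hn | hn
  · have := h1 n (Finset.mem_range.2 (by omega))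
    rw [dist_comm] at this
    exact hV' this
  · have hnm : n - (N + 1) + (N + 1) = n := Nat.sub_add_cancel hn.le
    have hd : dist (f^[n] x) (f^[n] y) ≤ dist (f^[N + 1] x) (f^[N + 1] y) := by
      have e1 : f^[n] x = f^[n - (N + 1)] (f^[N + 1] x) := by
        rw [← Function.iterate_add_apply, hnm]
      have e2 : f^[n] y = f^[n - (N + 1)] (f^[N + 1] y) := by
        rw [← Function.iterate_add_apply, hnm]
      rw [e1, e2]
      have hdl := (hiter (n - (N + 1))).2.dist_le_mul _ (hkey x hx) _ (hkey y hyU)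
      rwa [NNReal.coe_one, one_mul] at hdl
    have h2 := h1 (N + 1) (Finset.mem_range.2 (by omega))
    rw [dist_comm] at h2
    exact hV' (lt_of_le_of_lt hd h2)

/-- For every `R > 0` there is `Δ > 0` such that for all `λ > 1` the Julia
set of `f_λ(z) = λ(e^z − 1)` minus the balls `B(2πni, R)`, `n ∈ ℤ`, lies in
`{Re z ≥ Δ}`. -/
theorem stmt4 :
    ∀ R : ℝ, 0 < R → ∃ Δ : ℝ, 0 < Δ ∧ ∀ lam : ℝ, 1 < lam →
      juliaSet (fun z : ℂ => lam * (Complex.exp z - 1)) \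
          (⋃ n : ℤ, Metric.ball ((2 * Real.pi * n : ℝ) * Complex.I) R) ⊆
        {z : ℂ | Δ ≤ z.re} := by
  intro R hR
  have hpi := Real.pi_pos
  set d : ℝ := min (R / 4) (Real.pi / 2) with hd
  have hd0 : 0 < d := lt_min (by linarith) (by linarith)
  set cd : ℝ := max (Real.cos d) 0 with hcd
  have hcd0 : 0 ≤ cd := le_max_right _ _
  have hcd1 : cd < 1 := by
    rcases le_or_gt (Real.cos d) 0 with h | h
    · simp only [hcd]; rw [max_eq_right h]; norm_num
    · have hne : Real.cos d ≠ 1 := by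
        rw [Ne, Real.cos_eq_one_iff]
        rintro ⟨n, hn⟩
        rcases le_or_gt n 0 with h1 | h1
        · have : (n : ℝ) * (2 * Real.pi) ≤ 0 := by
            apply mul_nonpos_of_nonpos_of_nonneg
            · exact_mod_cast h1
            · positivity
          linarith [hn ▸ this]
        · have h2 : (1 : ℝ) ≤ (n : ℝ) := by exact_mod_cast h1
          have : (2 : ℝ) * Real.pi ≤ (n : ℝ) * (2 * Real.pi) := by nlinarith
          have hdle : d ≤ Real.pi / 2 := min_le_right _ _
          linarith [hn ▸ this]
      simp only [hcd]
      rw [max_eq_left h.le]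
      exact lt_of_le_of_ne (Real.cos_le_one d) hne
  set Δ : ℝ := min (R / 4) (Real.log (2 / (1 + cd))) with hΔ
  have hfrac : 1 < 2 / (1 + cd) := by
    rw [lt_div_iff₀ (by linarith)]
    linarith
  have hΔ0 : 0 < Δ := lt_min (by linarith) (Real.log_pos hfrac)
  have hΔR : Δ ≤ R / 4 := min_le_left _ _
  have hexpΔ : Real.exp Δ ≤ 2 / (1 + cd) := by
    calc Real.exp Δ ≤ Real.exp (Real.log (2 / (1 + cd))) :=
          Real.exp_le_exp.2 (min_le_right _ _)
      _ = 2 / (1 + cd) := Real.exp_log (by linarith)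
  set ε : ℝ := (1 - cd) / 2 with hε
  have hε0 : 0 < ε := by simp only [hε]; linarith
  have hkey : Real.exp Δ * cd ≤ 1 - ε := by
    have h1 : Real.exp Δ * (1 + cd) ≤ 2 :=
      (le_div_iff₀ (by linarith : (0:ℝ) < 1 + cd)).mp hexpΔ
    have h2 : 0 < Real.exp Δ := Real.exp_pos _
    nlinarith [sq_nonneg (1 - cd)]
  set ε₀ : ℝ := min ε (1 - Real.exp (-Δ)) with hε₀
  have hε₀0 : 0 < ε₀ :=
    lt_min hε0 (by linarith [Real.exp_lt_one_iff.2 (by linarith : -Δ < 0)])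
  refine ⟨Δ, hΔ0, ?_⟩
  intro lam hlam z hz
  obtain ⟨hzJ, hzB⟩ := hz
  simp only [Set.mem_setOf_eq]
  by_contra hzre
  push_neg at hzre
  exfalso
  apply hzJ
  have hlam0 : (0:ℝ) ≤ lam := by linarith
  simp only [Set.mem_iUnion, Metric.mem_ball, not_exists, not_lt] at hzB
  set ρ : ℝ := min (Δ - z.re) (R / 2) with hρ
  have hρ0 : 0 < ρ := lt_min (by linarith) (by linarith)
  refine ⟨Metric.ball z ρ, Metric.ball_mem_nhds z hρ0,
    fatou_of_step hlam Metric.isOpen_ball hε₀0 ?_⟩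
  intro w hw
  rw [Metric.mem_ball] at hw
  have hwre : w.re ≤ Δ := by
    have h1 : w.re - z.re ≤ |(w - z).re| := by
      rw [Complex.sub_re]; exact le_abs_self _
    have h2 : |(w - z).re| ≤ ‖w - z‖ := Complex.abs_re_le_norm _
    have h3 : ‖w - z‖ < ρ := by rwa [← Complex.dist_eq]
    have h4 : ρ ≤ Δ - z.re := min_le_left _ _
    linarith
  rcases le_or_gt w.re (-Δ) with hcase | hcase
  · -- far left: use half-plane estimate
    have h5 := half_step hlam0 hcase
    have h6 : Real.exp (-Δ) - 1 < 0 := by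
      have := Real.exp_lt_one_iff.2 (by linarith : -Δ < 0); linarith
    have h7 : lam * (Real.exp (-Δ) - 1) ≤ 1 * (Real.exp (-Δ) - 1) := by nlinarith
    have h8 : ε₀ ≤ 1 - Real.exp (-Δ) := min_le_right _ _
    linarith
  · -- in the strip: use the cosine bound
    have hwball : ∀ n : ℤ, d ≤ |w.im - 2 * Real.pi * n| := by
      intro n
      have h1 : R ≤ dist z ((2 * Real.pi * n : ℝ) * Complex.I) := hzB n
      have h2 : dist z _ ≤ dist z w + dist w ((2 * Real.pi * n : ℝ) * Complex.I) :=
        dist_triangle z w _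
      have h3 : dist z w < ρ := by rwa [dist_comm]
      have h4 : R / 2 ≤ dist w ((2 * Real.pi * n : ℝ) * Complex.I) := by
        have : ρ ≤ R / 2 := min_le_right _ _
        linarith
      have h5 : dist w ((2 * Real.pi * n : ℝ) * Complex.I)
          = Real.sqrt (w.re ^ 2 + (w.im - 2 * Real.pi * n) ^ 2) := by
        rw [Complex.dist_eq_re_im]
        norm_num
      rw [h5] at h4
      have h7 : 0 ≤ w.re ^ 2 + (w.im - 2 * Real.pi * n) ^ 2 := by positivity
      have h6 : (R / 2) ^ 2 ≤ w.re ^ 2 + (w.im - 2 * Real.pi * n) ^ 2 := by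
        nlinarith [Real.sq_sqrt h7, h4, hR]
      have h9 : w.re ^ 2 ≤ Δ ^ 2 := sq_le_sq' (by linarith) hwre
      have h10 : d ^ 2 ≤ (w.im - 2 * Real.pi * n) ^ 2 := by
        have hd4 : d ≤ R / 4 := min_le_left _ _
        have hd2 : d ^ 2 ≤ (R / 4) ^ 2 := pow_le_pow_left₀ hd0.le hd4 2
        have hΔ2 : Δ ^ 2 ≤ (R / 4) ^ 2 := pow_le_pow_left₀ hΔ0.le hΔR 2
        have hring : (R / 4) ^ 2 * 3 = (R / 2) ^ 2 - (R / 4) ^ 2 := by ring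
        have hsq : 0 ≤ (R / 4) ^ 2 := by positivity
        linarith
      calc d = Real.sqrt (d ^ 2) := (Real.sqrt_sq hd0.le).symm
        _ ≤ Real.sqrt ((w.im - 2 * Real.pi * n) ^ 2) := Real.sqrt_le_sqrt h10
        _ = |w.im - 2 * Real.pi * n| := Real.sqrt_sq_eq_abs _
    have hcos : Real.cos w.im ≤ cd := le_trans (cos_bound hd0 (min_le_right _ _) hwball) (le_max_left _ _)
    have hprod : Real.exp w.re * Real.cos w.im ≤ 1 - ε := by
      have h1 : Real.exp w.re * Real.cos w.im ≤ Real.exp w.re * cd :=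
        mul_le_mul_of_nonneg_left hcos (Real.exp_pos _).le
      have h2 : Real.exp w.re * cd ≤ Real.exp Δ * cd :=
        mul_le_mul_of_nonneg_right (Real.exp_le_exp.2 hwre) hcd0
      linarith
    rw [re_f]
    have h3 : lam * (Real.exp w.re * Real.cos w.im - 1) ≤ lam * (-ε) := by
      apply mul_le_mul_of_nonneg_left (by linarith) hlam0
    have h4 : lam * (-ε) ≤ 1 * (-ε) := mul_le_mul_of_nonpos_right hlam.le (by linarith)
    have h5 : ε₀ ≤ ε := min_le_left _ _
    linarith
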